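/- Let D be a rotation group on a three-dimensional real vector space V and let v, w be linearly independent. The unique rotation r with r : [v,w] ↦ [v,-w] satisfies r² = id and r v = v; moreover the only rotation s ≠ r with s v = v and s(ℝv + ℝw) = ℝv + ℝw is the identity. -/

import Mathlib

/-- The ray (half-line) spanned by `v`: all nonnegative multiples of `v`. -/
def Ray' {V : Type*} [AddCommGroup V] [Module ℝ V] (v : V) : Set V :=
  {x | ∃ c : ℝ, 0 ≤ c ∧ x = c • v}

/-- The half-plane `ℝ v + ℝ≥0 w`. -/
def HalfPlane {V : Type*} [AddCommGroup V] [Module ℝ V] (v w : V) : Set V :=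
  {x | ∃ a b : ℝ, 0 ≤ b ∧ x = a • v + b • w}

/-- `D` is a rotation group: for any two pairs of (half-plane, ray on its boundary)
there is exactly one element of `D` mapping the first pair to the second. -/
def IsRotationGroup {V : Type*} [AddCommGroup V] [Module ℝ V]
    (D : Subgroup (V ≃ₗ[ℝ] V)) : Prop :=
  ∀ v w v' w' : V, LinearIndependent ℝ ![v, w] → LinearIndependent ℝ ![v', w'] →
    ∃! d : V ≃ₗ[ℝ] V, d ∈ D ∧
      (d : V ≃ₗ[ℝ] V) '' HalfPlane v w = HalfPlane v' w' ∧
      (d : V ≃ₗ[ℝ] V) '' Ray' v = Ray' v'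

/-- `w ⊥ v` : some rotation sends `w` to `-w` and fixes `v`. -/
def Perp {V : Type*} [AddCommGroup V] [Module ℝ V]
    (D : Subgroup (V ≃ₗ[ℝ] V)) (w v : V) : Prop :=
  ∃ r ∈ D, r w = -w ∧ r v = v

lemma image_halfPlane {V : Type*} [AddCommGroup V] [Module ℝ V]
    (e : V ≃ₗ[ℝ] V) (v w : V) :
    (e : V ≃ₗ[ℝ] V) '' HalfPlane v w = HalfPlane (e v) (e w) := by
  ext x
  constructor
  · rintro ⟨y, ⟨a, b, hb, rfl⟩, rfl⟩
    exact ⟨a, b, hb, by simp⟩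
  · rintro ⟨a, b, hb, rfl⟩
    exact ⟨a • v + b • w, ⟨a, b, hb, rfl⟩, by simp⟩

lemma image_ray {V : Type*} [AddCommGroup V] [Module ℝ V]
    (e : V ≃ₗ[ℝ] V) (v : V) :
    (e : V ≃ₗ[ℝ] V) '' Ray' v = Ray' (e v) := by
  ext x
  constructor
  · rintro ⟨y, ⟨c, hc, rfl⟩, rfl⟩
    exact ⟨c, hc, by simp⟩
  · rintro ⟨c, hc, rfl⟩
    exact ⟨c • v, ⟨c, hc, rfl⟩, by simp⟩

lemma halfPlane_smul_left {V : Type*} [AddCommGroup V] [Module ℝ V]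
    {c : ℝ} (hc : c ≠ 0) (v w : V) :
    HalfPlane (c • v) w = HalfPlane v w := by
  ext x
  constructor
  · rintro ⟨a, b, hb, rfl⟩
    exact ⟨a * c, b, hb, by rw [mul_smul]⟩
  · rintro ⟨a, b, hb, rfl⟩
    exact ⟨a / c, b, hb, by rw [smul_smul, div_mul_cancel₀ _ hc]⟩

lemma halfPlane_shear {V : Type*} [AddCommGroup V] [Module ℝ V]
    (v w : V) (a : ℝ) {b : ℝ} (hb : 0 < b) :
    HalfPlane v (a • v + b • w) = HalfPlane v w := by
  ext x
  constructor
  · rintro ⟨p, q, hq, rfl⟩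
    refine ⟨p + q * a, q * b, by positivity, by module⟩
  · rintro ⟨p, q, hq, rfl⟩
    refine ⟨p - (q / b) * a, q / b, by positivity, ?_⟩
    have hb' : b ≠ 0 := hb.ne'
    match_scalars <;> field_simp <;> ring

theorem stmt1 {V : Type*} [AddCommGroup V] [Module ℝ V]
    (hdim : Module.finrank ℝ V = 3)
    (D : Subgroup (V ≃ₗ[ℝ] V)) (hD : IsRotationGroup D)
    (v w : V) (hvw : LinearIndependent ℝ ![v, w])
    (r : V ≃ₗ[ℝ] V) (hr : r ∈ D)
    (hH : (r : V ≃ₗ[ℝ] V) '' HalfPlane v w = HalfPlane v (-w))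
    (hR : (r : V ≃ₗ[ℝ] V) '' Ray' v = Ray' v) :
    r ^ 2 = 1 ∧ r v = v ∧
      ∀ s : V ≃ₗ[ℝ] V, s ∈ D → s v = v →
        (s : V ≃ₗ[ℝ] V) '' (Submodule.span ℝ {v, w} : Set V) =
          (Submodule.span ℝ {v, w} : Set V) →
        s = 1 ∨ s = r := by
  have hpair : ∀ s t : ℝ, s • v + t • w = 0 → s = 0 ∧ t = 0 :=
    LinearIndependent.pair_iff.mp hvw
  have hv0 : v ≠ 0 := by
    intro h
    have := (hpair 1 0 (by simp [h])).1
    norm_num at this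
  -- r v = c • v with c > 0
  have hrvmem : r v ∈ Ray' v := by
    rw [← hR]
    exact ⟨v, ⟨1, zero_le_one, (one_smul ℝ v).symm⟩, rfl⟩
  obtain ⟨c, hc0, hcv⟩ := hrvmem
  have hcpos : 0 < c := by
    rcases hc0.lt_or_eq with h | h
    · exact h
    · exfalso
      apply hv0
      have : r v = 0 := by rw [hcv, ← h, zero_smul]
      simpa using r.injective (by simpa using this)
  -- HalfPlane v (r w) = HalfPlane v (-w)
  have hHvw : HalfPlane v (r w) = HalfPlane v (-w) := by
    rw [← hH, image_halfPlane, hcv, halfPlane_smul_left hcpos.ne' v (r w)]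
  have h1 : -w ∈ HalfPlane v (r w) := by
    rw [hHvw]; exact ⟨0, 1, zero_le_one, by simp⟩
  have h2 : r w ∈ HalfPlane v (-w) := by
    rw [← hHvw]; exact ⟨0, 1, zero_le_one, by simp⟩
  obtain ⟨a, b, hb, hab⟩ := h1
  obtain ⟨a', b', hb', hab'⟩ := h2
  rw [hab'] at hab
  have key : (a + b * a') • v + (1 - b * b') • w = 0 := by
    linear_combination (norm := module) (-1 : ℝ) • hab
  obtain ⟨hk1, hk2⟩ := hpair _ _ key
  have hbb' : b * b' = 1 := by linarith
  have hb'pos : 0 < b' := by nlinarith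
  have hrw : r w = a' • v + b' • (-w) := hab'
  have hrnw : (r : V ≃ₗ[ℝ] V) (-w) = (-a') • v + b' • w := by
    rw [map_neg, hrw]; module
  have hH2 : (r : V ≃ₗ[ℝ] V) '' HalfPlane v (-w) = HalfPlane v w := by
    rw [image_halfPlane, hcv, halfPlane_smul_left hcpos.ne', hrnw,
      halfPlane_shear v w (-a') hb'pos]
  -- r ^ 2 = 1
  have hcoe2 : ⇑(r ^ 2 : V ≃ₗ[ℝ] V) = ⇑r ∘ ⇑r := by
    ext x; rfl
  have hr2H : (↑(r ^ 2) : V ≃ₗ[ℝ] V) '' HalfPlane v w = HalfPlane v w := by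
    rw [hcoe2, Set.image_comp, hH, hH2]
  have hr2R : (↑(r ^ 2) : V ≃ₗ[ℝ] V) '' Ray' v = Ray' v := by
    rw [hcoe2, Set.image_comp, hR, hR]
  obtain ⟨d, _, hdun⟩ := hD v w v w hvw hvw
  have hr2 : r ^ 2 = 1 := by
    have e1 : r ^ 2 = d := hdun _ ⟨pow_mem hr 2, hr2H, hr2R⟩
    have e2 : (1 : V ≃ₗ[ℝ] V) = d := by
      refine hdun _ ⟨one_mem D, ?_, ?_⟩ <;> simp [LinearEquiv.coe_one, Set.image_id]
    rw [e1, ← e2]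
  -- c = 1
  have hc1 : c = 1 := by
    have : (c * c) • v = v := by
      have h2v : (r ^ 2 : V ≃ₗ[ℝ] V) v = v := by rw [hr2]; rfl
      rw [hcoe2] at h2v
      simp only [Function.comp_apply] at h2v
      rw [hcv, map_smul, hcv, smul_smul] at h2v
      exact h2v
    have : (c * c - 1) • v = 0 := by rw [sub_smul, this, one_smul, sub_self]
    rcases smul_eq_zero.mp this with h | h
    · nlinarith
    · exact absurd h hv0
  have hrv : r v = v := by rw [hcv, hc1, one_smul]
  refine ⟨hr2, hrv, ?_⟩
  -- uniqueness
  intro s hs hsv hsP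
  have hswP : s w ∈ (Submodule.span ℝ {v, w} : Set V) := by
    rw [← hsP]
    exact Set.mem_image_of_mem _ (Submodule.subset_span (Set.mem_insert_of_mem _ rfl))
  obtain ⟨α, β, hαβ⟩ := Submodule.mem_span_pair.mp hswP
  have hβ0 : β ≠ 0 := by
    intro h
    rw [h, zero_smul, add_zero] at hαβ
    have : s (α • v) = s w := by rw [map_smul, hsv, hαβ]
    have hwv : w = α • v := (s.injective this).symm
    have := (hpair α (-1) (by rw [hwv]; module)).2
    norm_num at this
  have hsR : (s : V ≃ₗ[ℝ] V) '' Ray' v = Ray' v := by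
    rw [image_ray, hsv]
  have hsH : (s : V ≃ₗ[ℝ] V) '' HalfPlane v w = HalfPlane v (α • v + β • w) := by
    rw [image_halfPlane, hsv, hαβ]
  rcases hβ0.lt_or_gt with hβ | hβ
  · -- β < 0 : s = r
    right
    have hsH' : (s : V ≃ₗ[ℝ] V) '' HalfPlane v w = HalfPlane v (-w) := by
      rw [hsH]
      have : α • v + β • w = α • v + (-β) • (-w) := by module
      rw [this, halfPlane_shear v (-w) α (by linarith : (0:ℝ) < -β)]
    have hvw' : LinearIndependent ℝ ![v, -w] := by
      rw [LinearIndependent.pair_iff]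
      intro p q hpq
      have := hpair p (-q) (by rw [← hpq]; module)
      exact ⟨this.1, by linarith [this.2]⟩
    obtain ⟨d', _, hd'un⟩ := hD v w v (-w) hvw hvw'
    have e1 : s = d' := hd'un _ ⟨hs, hsH', hsR⟩
    have e2 : r = d' := hd'un _ ⟨hr, hH, hR⟩
    rw [e1, ← e2]
  · -- β > 0 : s = 1
    left
    have hsH' : (s : V ≃ₗ[ℝ] V) '' HalfPlane v w = HalfPlane v w := by
      rw [hsH, halfPlane_shear v w α hβ]
    have e1 : s = d := hdun _ ⟨hs, hsH', hsR⟩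
    have e2 : (1 : V ≃ₗ[ℝ] V) = d := by
      refine hdun _ ⟨one_mem D, ?_, ?_⟩ <;> simp [LinearEquiv.coe_one, Set.image_id]
    rw [e1, ← e2]
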